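/- Let $k \geq 1$, $n > k$, and $d = \prod_{j=0}^{k}(n-j)^2 - n$. Then for every $0 \leq i \leq k$, $d + i$ is positive and not a perfect square, so $\mathbb{Q}(\sqrt{d+i})$ is a real quadratic field. -/

import Mathlib

open Polynomial in
theorem sqrtNatIsIntegral (N : ℕ) : IsIntegral ℚ (Real.sqrt N) := by
  refine ⟨X ^ 2 - C (N : ℚ), monic_X_pow_sub_C _ (by norm_num), ?_⟩
  simp [Real.sq_sqrt (by positivity : (0:ℝ) ≤ (N:ℝ))]

/-- The real quadratic field `ℚ(√N)`, realized as a subfield of `ℝ`. -/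
noncomputable def Qsqrt (N : ℕ) : IntermediateField ℚ ℝ :=
  IntermediateField.adjoin ℚ {Real.sqrt N}

instance (N : ℕ) : FiniteDimensional ℚ (Qsqrt N) :=
  IntermediateField.adjoin.finiteDimensional (sqrtNatIsIntegral N)

instance (N : ℕ) : NumberField (Qsqrt N) := ⟨⟩

/-- The fundamental unit of `ℚ(√N)`, i.e. the smallest real number `> 1` that is (the image
under the real embedding of) a unit of the ring of integers of `ℚ(√N)`. -/
noncomputable def fundUnit (N : ℕ) : ℝ :=
  sInf {x : ℝ | 1 < x ∧ ∃ u : (NumberField.RingOfIntegers (Qsqrt N))ˣ,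
    ((algebraMap (NumberField.RingOfIntegers (Qsqrt N)) (Qsqrt N) u : Qsqrt N) : ℝ) = x}


lemma key_arith (k : ℕ) (hk : 1 ≤ k) (n : ℕ) (hn : k < n)
    (d : ℕ) (hd : (d : ℤ) = (∏ j ∈ Finset.range (k + 1), ((n : ℤ) - j) ^ 2) - n)
    (i : ℕ) (hi : i ≤ k) :
    ∃ B m : ℤ, 2 ≤ B ∧ 1 ≤ m ∧ m ≤ B ∧ ((d + i : ℕ) : ℤ) = B ^ 2 - m := by
  set s := Finset.range (k + 1) with hs
  have his : i ∈ s := Finset.mem_range.2 (Nat.lt_succ_of_le hi)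
  set A : ℤ := ∏ j ∈ s.erase i, ((n : ℤ) - j) with hA
  set m : ℤ := (n : ℤ) - i with hm
  have hprod : (∏ j ∈ s, ((n : ℤ) - j)) = m * A := by
    exact (Finset.mul_prod_erase s _ his).symm
  have hfac : ∀ j ∈ s, (1 : ℤ) ≤ (n : ℤ) - j := by
    intro j hj
    have : j ≤ k := Nat.lt_succ_iff.mp (Finset.mem_range.mp hj)
    have : j < n := lt_of_le_of_lt this hn
    omega
  have hone : ∀ t : Finset ℕ, (∀ j ∈ t, (1:ℤ) ≤ (n : ℤ) - j) → 1 ≤ ∏ j ∈ t, ((n : ℤ) - j) := by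
    intro t ht
    calc (1:ℤ) = ∏ _j ∈ t, (1:ℤ) := (Finset.prod_const_one).symm
      _ ≤ ∏ j ∈ t, ((n : ℤ) - j) := Finset.prod_le_prod (by simp) ht
  have hA1 : 1 ≤ A := hone _ (fun j hj => hfac j (Finset.mem_of_mem_erase hj))
  have hm1 : 1 ≤ m := hfac i his
  have h0s : (0 : ℕ) ∈ s := Finset.mem_range.2 (Nat.succ_pos k)
  have hB2 : 2 ≤ m * A := by
    have h2 : (2 : ℤ) ≤ (n : ℤ) - (0 : ℕ) := by push_cast; omega
    have he : ((n : ℤ) - (0:ℕ)) * ∏ j ∈ s.erase 0, ((n : ℤ) - j) = ∏ j ∈ s, ((n : ℤ) - j) :=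
      Finset.mul_prod_erase s (fun j => (n:ℤ) - (j:ℕ)) h0s
    have h1e : (1:ℤ) ≤ ∏ j ∈ s.erase 0, ((n : ℤ) - j) :=
      hone _ (fun j hj => hfac j (Finset.mem_of_mem_erase hj))
    calc (2 : ℤ) ≤ (n : ℤ) - (0 : ℕ) := h2
      _ ≤ ((n : ℤ) - (0:ℕ)) * ∏ j ∈ s.erase 0, ((n : ℤ) - j) :=
          le_mul_of_one_le_right (by omega) h1e
      _ = ∏ j ∈ s, ((n : ℤ) - j) := he
      _ = m * A := hprod
  refine ⟨m * A, m, hB2, hm1, le_mul_of_one_le_right (by omega) hA1, ?_⟩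
  have : ((d + i : ℕ) : ℤ) = (∏ j ∈ s, ((n : ℤ) - j) ^ 2) - m := by
    push_cast [hd, hm]; ring
  rw [this, Finset.prod_pow, hprod]

lemma not_square_of_between (N : ℕ) (B m : ℤ) (hB : 2 ≤ B) (hm1 : 1 ≤ m) (hmB : m ≤ B)
    (hN : (N : ℤ) = B ^ 2 - m) : 0 < N ∧ ¬ IsSquare N := by
  constructor
  · have : (0 : ℤ) < (N : ℤ) := by nlinarith
    exact_mod_cast this
  · rintro ⟨t, ht⟩
    have ht' : ((t : ℤ)) * t = B ^ 2 - m := by rw [← hN]; exact_mod_cast ht.symm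
    have ht0 : (0 : ℤ) ≤ (t : ℤ) := Int.natCast_nonneg t
    have h1 : (t : ℤ) < B := by nlinarith
    have h2 : (t : ℤ) ≤ B - 1 := by omega
    nlinarith

open Polynomial in
lemma finrank_Qsqrt (N : ℕ) (hN : ¬ IsSquare N) :
    Module.finrank ℚ (Qsqrt N) = 2 := by
  rw [Qsqrt, IntermediateField.adjoin.finrank (sqrtNatIsIntegral N)]
  have hirr : Irrational (Real.sqrt N) := irrational_sqrt_natCast_iff.mpr hN
  have hle : (minpoly ℚ (Real.sqrt N)).natDegree ≤ 2 := by
    have := minpoly.min ℚ (Real.sqrt N) (monic_X_pow_sub_C ((N : ℚ)) (two_ne_zero))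
      (by simp [Real.sq_sqrt (by positivity : (0:ℝ) ≤ (N:ℝ))])
    have h2 : (X ^ 2 - C ((N:ℚ)) : ℚ[X]).natDegree = 2 := by
      rw [natDegree_X_pow_sub_C]
    calc (minpoly ℚ (Real.sqrt N)).natDegree
        ≤ (X ^ 2 - C ((N:ℚ)) : ℚ[X]).natDegree := natDegree_le_natDegree this
      _ = 2 := h2
  have hge : 2 ≤ (minpoly ℚ (Real.sqrt N)).natDegree := by
    rw [minpoly.two_le_natDegree_iff (sqrtNatIsIntegral N)]
    intro hmem
    obtain ⟨q, hq⟩ := hmem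
    exact hirr ⟨q, hq⟩
  omega

/-- Let `k ≥ 1`, `n > k`, `d = ∏_{j=0}^k (n-j)² - n`. Then for every `0 ≤ i ≤ k`, `d + i` is
positive and not a perfect square, so `ℚ(√(d+i))` is a real quadratic field (of degree 2). -/
theorem statement14 (k : ℕ) (hk : 1 ≤ k) (n : ℕ) (hn : k < n)
    (d : ℕ) (hd : (d : ℤ) = (∏ j ∈ Finset.range (k + 1), ((n : ℤ) - j) ^ 2) - n)
    (i : ℕ) (hi : i ≤ k) :
    0 < d + i ∧ ¬ IsSquare (d + i) ∧ Module.finrank ℚ (Qsqrt (d + i)) = 2 := by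
  obtain ⟨B, m, hB, hm1, hmB, hN⟩ := key_arith k hk n hn d hd i hi
  obtain ⟨hpos, hnsq⟩ := not_square_of_between (d + i) B m hB hm1 hmB hN
  exact ⟨hpos, hnsq, finrank_Qsqrt _ hnsq⟩
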